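/- arXiv:1312.0451 — 2 statements merged into one kernel-verified Lean document; each statement's English description precedes it below -/
import Mathlib

section
/- Theorem 5 (consistency of the low-confidence rule): consider a sequence of committees, the n-th consisting of n experts with competences p_{n,i} ∈ (0,1) and independent estimates p̂_{n,i} = k_{n,i}/m_{n,i} with k_{n,i} ~ Binomial(m_{n,i}, p_{n,i}) independent of the correctness indicators. If (1/√n)·Σ_{i=1}^n (p_{n,i} − 1/2)² → ∞ as n → ∞, then the probability of error of the low-confidence rule in the n-th committee, P(Σ_{i=1}^n (p̂_{n,i} − 1/2)(ξ_{n,i} − 1/2) ≤ 0), tends to 0 as n → ∞. -/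
open MeasureTheory ProbabilityTheory Filter

lemma binom_total (m : ℕ) (x : ℝ) :
    ∑ j ∈ Finset.range (m + 1), ((m.choose j : ℝ) * x ^ j * (1 - x) ^ (m - j)) = 1 := by
  have h := add_pow x (1 - x) m
  simp only [add_sub_cancel, one_pow] at h
  conv_rhs => rw [h]
  exact Finset.sum_congr rfl fun j _ => by ring

lemma binom_mean (m : ℕ) (hm : 1 ≤ m) (x : ℝ) :
    ∑ j ∈ Finset.range (m + 1),
      (j : ℝ) * ((m.choose j : ℝ) * x ^ j * (1 - x) ^ (m - j)) = m * x := by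
  obtain ⟨m', rfl⟩ : ∃ m', m = m' + 1 := ⟨m - 1, by omega⟩
  rw [Finset.sum_range_succ']
  simp only [Nat.cast_zero, zero_mul, add_zero]
  have key : ∀ j : ℕ, ((j + 1 : ℕ) : ℝ) * (((m' + 1).choose (j + 1) : ℝ)) =
      ((m' + 1 : ℕ) : ℝ) * ((m'.choose j : ℝ)) := by
    intro j
    rw [← Nat.cast_mul, ← Nat.cast_mul]
    congr 1
    rw [mul_comm, ← Nat.add_one_mul_choose_eq]
  calc ∑ j ∈ Finset.range (m' + 1), ((j + 1 : ℕ) : ℝ) *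
        (((m' + 1).choose (j + 1) : ℝ) * x ^ (j + 1) * (1 - x) ^ (m' + 1 - (j + 1)))
      = ∑ j ∈ Finset.range (m' + 1),
        ((m' + 1 : ℕ) : ℝ) * x * ((m'.choose j : ℝ) * x ^ j * (1 - x) ^ (m' - j)) := by
        refine Finset.sum_congr rfl fun j _ => ?_
        have h2 : m' + 1 - (j + 1) = m' - j := by omega
        rw [h2]
        have := key j
        calc ((j + 1 : ℕ) : ℝ) * (((m' + 1).choose (j + 1) : ℝ) * x ^ (j + 1) * (1 - x) ^ (m' - j))
            = (((j + 1 : ℕ) : ℝ) * ((m' + 1).choose (j + 1) : ℝ)) * (x ^ (j + 1) * (1 - x) ^ (m' - j)) := by ring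
          _ = (((m' + 1 : ℕ) : ℝ) * ((m'.choose j : ℝ))) * (x ^ (j + 1) * (1 - x) ^ (m' - j)) := by rw [this]
          _ = ((m' + 1 : ℕ) : ℝ) * x * ((m'.choose j : ℝ) * x ^ j * (1 - x) ^ (m' - j)) := by ring
    _ = ((m' + 1 : ℕ) : ℝ) * x * ∑ j ∈ Finset.range (m' + 1),
        ((m'.choose j : ℝ) * x ^ j * (1 - x) ^ (m' - j)) := by rw [Finset.mul_sum]
    _ = ((m' + 1 : ℕ) : ℝ) * x := by rw [binom_total]; ring

section helpers

variable {Ω : Type*} [MeasurableSpace Ω] {μ : Measure Ω} [IsProbabilityMeasure μ]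

lemma k_le_ae (k : Ω → ℕ) (hk : Measurable k) (m : ℕ) (p : ℝ) (hp : p ∈ Set.Ioo (0:ℝ) 1)
    (hb : ∀ j ≤ m, μ {ω | k ω = j} =
        ENNReal.ofReal ((m.choose j : ℝ) * p ^ j * (1 - p) ^ (m - j))) :
    ∀ᵐ ω ∂μ, k ω ≤ m := by
  have hmeas : ∀ j : ℕ, MeasurableSet {ω | k ω = j} := fun j => hk (measurableSet_singleton j)
  have hnn : ∀ j : ℕ, 0 ≤ (m.choose j : ℝ) * p ^ j * (1 - p) ^ (m - j) := by
    intro j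
    have h1 : (0:ℝ) ≤ p := hp.1.le
    have h2 : (0:ℝ) ≤ 1 - p := by linarith [hp.2]
    positivity
  have hset : {ω | k ω ≤ m} = ⋃ j ∈ Finset.range (m + 1), {ω | k ω = j} := by
    ext ω
    simp only [Set.mem_setOf_eq, Set.mem_iUnion, Finset.mem_range, Nat.lt_succ_iff]
    exact ⟨fun h => ⟨k ω, h, rfl⟩, fun ⟨j, hj, hje⟩ => hje ▸ hj⟩
  have hunion : μ {ω | k ω ≤ m} = 1 := by
    rw [hset, measure_biUnion_finset ?_ (fun j _ => hmeas j)]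
    · calc ∑ j ∈ Finset.range (m + 1), μ {ω | k ω = j}
          = ∑ j ∈ Finset.range (m + 1),
            ENNReal.ofReal ((m.choose j : ℝ) * p ^ j * (1 - p) ^ (m - j)) :=
            Finset.sum_congr rfl fun j hj => hb j (Nat.lt_succ_iff.mp (Finset.mem_range.mp hj))
        _ = ENNReal.ofReal (∑ j ∈ Finset.range (m + 1),
            ((m.choose j : ℝ) * p ^ j * (1 - p) ^ (m - j))) :=
            (ENNReal.ofReal_sum_of_nonneg fun j _ => hnn j).symm
        _ = 1 := by rw [binom_total]; simp
    · intro i _ j _ hij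
      rw [Function.onFun, Set.disjoint_left]
      intro ω hωi hωj
      exact hij (hωi.symm.trans hωj)
  have hms : MeasurableSet {ω | k ω ≤ m} := hk measurableSet_Iic
  rw [ae_iff]
  have : {ω | ¬ k ω ≤ m} = {ω | k ω ≤ m}ᶜ := rfl
  rw [this, measure_compl hms (measure_ne_top μ _), hunion, measure_univ, tsub_self]

lemma integral_k (k : Ω → ℕ) (hk : Measurable k) (m : ℕ) (hm : 1 ≤ m) (p : ℝ)
    (hp : p ∈ Set.Ioo (0:ℝ) 1)
    (hb : ∀ j ≤ m, μ {ω | k ω = j} =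
        ENNReal.ofReal ((m.choose j : ℝ) * p ^ j * (1 - p) ^ (m - j))) :
    ∫ ω, (k ω : ℝ) ∂μ = m * p := by
  have hmeas : ∀ j : ℕ, MeasurableSet {ω | k ω = j} := fun j => hk (measurableSet_singleton j)
  have hnn : ∀ j : ℕ, 0 ≤ (m.choose j : ℝ) * p ^ j * (1 - p) ^ (m - j) := by
    intro j
    have h1 : (0:ℝ) ≤ p := hp.1.le
    have h2 : (0:ℝ) ≤ 1 - p := by linarith [hp.2]
    positivity
  have hae := k_le_ae k hk m p hp hb
  have heq : (fun ω => (k ω : ℝ)) =ᵐ[μ] fun ω => ∑ j ∈ Finset.range (m + 1),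
      Set.indicator {ω' | k ω' = j} (fun _ => (j : ℝ)) ω := by
    filter_upwards [hae] with ω hω
    rw [Finset.sum_eq_single (k ω)]
    · exact (Set.indicator_of_mem (by exact rfl) _).symm
    · intro j _ hne
      refine Set.indicator_of_notMem (fun h => ?_) _
      exact hne ((Set.mem_setOf_eq.mp h).symm)
    · intro h
      exact absurd (Finset.mem_range.mpr (Nat.lt_succ_of_le hω)) h
  rw [integral_congr_ae heq, integral_finset_sum _
    (fun j _ => (integrable_const ((j : ℕ) : ℝ)).indicator (hmeas j))]
  have hterm : ∀ j ∈ Finset.range (m + 1),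
      ∫ ω, Set.indicator {ω' | k ω' = j} (fun _ => (j : ℝ)) ω ∂μ =
      (j : ℝ) * ((m.choose j : ℝ) * p ^ j * (1 - p) ^ (m - j)) := by
    intro j hj
    rw [integral_indicator_const _ (hmeas j), measureReal_def, hb j (Nat.lt_succ_iff.mp (Finset.mem_range.mp hj)),
      ENNReal.toReal_ofReal (hnn j), smul_eq_mul, mul_comm]
  rw [Finset.sum_congr rfl hterm, binom_mean m hm]

end helpers


/-- Theorem 5 (consistency of the low-confidence rule): for a sequence of committees,
the `n`-th having `n` experts with competences `p n i`, `{0,1}`-valued correctness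
indicators `ξ n i` with `P(ξ n i = 1) = p n i`, and independent binomial estimates
`p̂ n i = k n i / m n i`, if `(1/√n) ∑ i (p n i − 1/2)² → ∞`, then the probability of
error of the low-confidence rule tends to `0`. -/
theorem low_confidence_rule_consistency
    (Ω : ℕ → Type*) [∀ n, MeasurableSpace (Ω n)]
    (μ : ∀ n, Measure (Ω n)) [∀ n, IsProbabilityMeasure (μ n)]
    (p : ∀ n : ℕ, Fin n → ℝ) (hp : ∀ n i, p n i ∈ Set.Ioo (0 : ℝ) 1)
    (ξ : ∀ n : ℕ, Fin n → Ω n → ℝ)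
    (hξmeas : ∀ n i, Measurable (ξ n i))
    (hξval : ∀ n i ω, ξ n i ω = 0 ∨ ξ n i ω = 1)
    (hξprob : ∀ n i, μ n {ω | ξ n i ω = 1} = ENNReal.ofReal (p n i))
    (m : ∀ n : ℕ, Fin n → ℕ) (hm : ∀ n i, 1 ≤ m n i)
    (k : ∀ n : ℕ, Fin n → Ω n → ℕ) (hkmeas : ∀ n i, Measurable (k n i))
    (hbinom : ∀ n i j, j ≤ m n i → μ n {ω | k n i ω = j} =
        ENNReal.ofReal ((m n i).choose j * p n i ^ j * (1 - p n i) ^ (m n i - j)))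
    (hind : ∀ n, iIndepFun (fun i ω => (ξ n i ω, k n i ω)) (μ n))
    (hindin : ∀ n i, IndepFun (ξ n i) (k n i) (μ n))
    (hdiv : Tendsto (fun n : ℕ => (1 / Real.sqrt n) * ∑ i, (p n i - 1/2) ^ 2)
      atTop atTop) :
    Tendsto (fun n : ℕ =>
        μ n {ω | ∑ i, ((k n i ω : ℝ) / (m n i : ℝ) - 1/2) * (ξ n i ω - 1/2) ≤ 0})
      atTop (nhds 0) := by
  set A : ℕ → ℝ := fun n => ∑ i, (p n i - 1/2) ^ 2 with hA_def
  -- Key bound for a fixed committee with positive mean drift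
  have key : ∀ n : ℕ, 0 < A n →
      μ n {ω | ∑ i, ((k n i ω : ℝ) / (m n i : ℝ) - 1/2) * (ξ n i ω - 1/2) ≤ 0} ≤
      ENNReal.ofReal ((n : ℝ) / 16 / (A n) ^ 2) := by
    intro n hApos
    set Y : Fin n → Ω n → ℝ := fun i ω => ((k n i ω : ℝ) / (m n i : ℝ) - 1/2) with hY_def
    set Z : Fin n → Ω n → ℝ := fun i ω => ξ n i ω - 1/2 with hZ_def
    set X : Fin n → Ω n → ℝ := fun i ω => Y i ω * Z i ω with hX_def
    have hmR : ∀ i, (0 : ℝ) < (m n i : ℝ) := fun i => by exact_mod_cast hm n i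
    have hkae : ∀ i, ∀ᵐ ω ∂μ n, k n i ω ≤ m n i := fun i =>
      k_le_ae (k n i) (hkmeas n i) (m n i) (p n i) (hp n i) (fun j hj => hbinom n i j hj)
    have hkRmeas : ∀ i, Measurable (fun ω => (k n i ω : ℝ)) := fun i => by
      exact measurable_from_top.comp (hkmeas n i)
    have hYmeas : ∀ i, Measurable (Y i) := fun i => ((hkRmeas i).div_const _).sub_const _
    have hZmeas : ∀ i, Measurable (Z i) := fun i => (hξmeas n i).sub_const _
    have hXmeas : ∀ i, Measurable (X i) := fun i => (hYmeas i).mul (hZmeas i)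
    have hZbound : ∀ i ω, |Z i ω| ≤ 1/2 := by
      intro i ω
      rcases hξval n i ω with h | h <;> simp only [hZ_def, h] <;> rw [abs_le] <;>
        constructor <;> norm_num
    have hYbound : ∀ i, ∀ᵐ ω ∂μ n, |Y i ω| ≤ 1/2 := by
      intro i
      filter_upwards [hkae i] with ω hω
      have h0 : (0 : ℝ) ≤ (k n i ω : ℝ) / (m n i : ℝ) :=
        div_nonneg (Nat.cast_nonneg _) (hmR i).le
      have h1 : (k n i ω : ℝ) / (m n i : ℝ) ≤ 1 := by
        rw [div_le_one (hmR i)]; exact_mod_cast hω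
      rw [hY_def, abs_le]; constructor <;> simp only <;> linarith
    have hXbound : ∀ i, ∀ᵐ ω ∂μ n, |X i ω| ≤ 1/4 := by
      intro i
      filter_upwards [hYbound i] with ω hω
      have := hZbound i ω
      calc |X i ω| = |Y i ω| * |Z i ω| := abs_mul _ _
        _ ≤ (1/2) * (1/2) := by
            apply mul_le_mul hω this (abs_nonneg _) (by norm_num)
        _ = 1/4 := by norm_num
    have hXmem : ∀ i, MemLp (X i) 2 (μ n) := fun i =>
      MemLp.of_bound (hXmeas i).aestronglyMeasurable (1/4)
        ((hXbound i).mono fun ω hω => by rwa [Real.norm_eq_abs])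
    have hXint : ∀ i, Integrable (X i) (μ n) := fun i => (hXmem i).integrable one_le_two
    -- expectations
    have hkint : ∀ i, Integrable (fun ω => (k n i ω : ℝ)) (μ n) := by
      intro i
      refine (integrable_const ((m n i : ℕ) : ℝ)).mono' (hkRmeas i).aestronglyMeasurable ?_
      filter_upwards [hkae i] with ω hω
      rw [Real.norm_eq_abs, abs_of_nonneg (Nat.cast_nonneg _)]
      exact_mod_cast hω
    have hYint : ∀ i, Integrable (Y i) (μ n) := fun i =>
      ((hkint i).div_const _).sub (integrable_const _)
    have hEY : ∀ i, ∫ ω, Y i ω ∂μ n = p n i - 1/2 := by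
      intro i
      have hEk : ∫ ω, (k n i ω : ℝ) ∂μ n = (m n i : ℝ) * p n i :=
        integral_k (k n i) (hkmeas n i) (m n i) (hm n i) (p n i) (hp n i)
          (fun j hj => hbinom n i j hj)
      rw [hY_def]
      rw [integral_sub ((hkint i).div_const _) (integrable_const _), integral_div, hEk,
        integral_const, measureReal_def, measure_univ, ENNReal.toReal_one, one_smul,
        mul_comm, mul_div_assoc, div_self (hmR i).ne', mul_one]
    have hξsetmeas : ∀ i, MeasurableSet {ω | ξ n i ω = 1} := fun i =>
      hξmeas n i (measurableSet_singleton 1)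
    have hξeq : ∀ i, ξ n i = Set.indicator {ω | ξ n i ω = 1} (fun _ => (1:ℝ)) := by
      intro i
      funext ω
      rcases hξval n i ω with h | h
      · rw [h, Set.indicator_of_notMem]
        intro hmem
        rw [Set.mem_setOf_eq, h] at hmem
        norm_num at hmem
      · rw [h, Set.indicator_of_mem (Set.mem_setOf_eq ▸ h)]
    have hξint : ∀ i, Integrable (ξ n i) (μ n) := fun i =>
      (hξeq i) ▸ (integrable_const (1:ℝ)).indicator (hξsetmeas i)
    have hZint : ∀ i, Integrable (Z i) (μ n) := fun i => (hξint i).sub (integrable_const _)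
    have hEZ : ∀ i, ∫ ω, Z i ω ∂μ n = p n i - 1/2 := by
      intro i
      have hEξ : ∫ ω, ξ n i ω ∂μ n = p n i := by
        conv_lhs => rw [show (fun ω => ξ n i ω) = ξ n i from rfl, hξeq i]
        rw [integral_indicator_const _ (hξsetmeas i), measureReal_def, hξprob n i,
          ENNReal.toReal_ofReal (hp n i).1.le, smul_eq_mul, mul_one]
      rw [hZ_def]
      rw [integral_sub (hξint i) (integrable_const _), hEξ, integral_const, measureReal_def, measure_univ,
        ENNReal.toReal_one, one_smul]
    have hEX : ∀ i, ∫ ω, X i ω ∂μ n = (p n i - 1/2) ^ 2 := by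
      intro i
      have hYZind : IndepFun (Y i) (Z i) (μ n) := by
        have h1 : IndepFun (Z i) (Y i) (μ n) :=
          (hindin n i).comp (measurable_id.sub_const (1/2 : ℝ))
            ((measurable_from_top.div_const _).sub_const (1/2 : ℝ))
        exact h1.symm
      have := hYZind.integral_mul_eq_mul_integral (hYint i).aestronglyMeasurable (hZint i).aestronglyMeasurable
      calc ∫ ω, X i ω ∂μ n = ∫ ω, (Y i * Z i) ω ∂μ n := rfl
        _ = (∫ ω, Y i ω ∂μ n) * ∫ ω, Z i ω ∂μ n := this
        _ = (p n i - 1/2) ^ 2 := by rw [hEY i, hEZ i, sq]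
    -- variance bounds
    have hVar : ∀ i, variance (X i) (μ n) ≤ 1/16 := by
      intro i
      refine le_trans (variance_le_expectation_sq (hXmeas i).aestronglyMeasurable) ?_
      have hsq : (fun ω => X i ω ^ 2) ≤ᶠ[ae (μ n)] fun _ => (1/16 : ℝ) := by
        filter_upwards [hXbound i] with ω hω
        nlinarith [sq_abs (X i ω), abs_nonneg (X i ω)]
      have hmono : ∫ ω, X i ω ^ 2 ∂μ n ≤ ∫ _, (1/16 : ℝ) ∂μ n :=
        integral_mono_ae (hXmem i).integrable_sq (integrable_const _) hsq
      calc (μ n)[X i ^ 2] = ∫ ω, X i ω ^ 2 ∂μ n := rfl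
        _ ≤ ∫ _, (1/16 : ℝ) ∂μ n := hmono
        _ = 1/16 := by simp
    have hiIX : iIndepFun X (μ n) := by
      have := (hind n).comp
        (fun i => fun q : ℝ × ℕ => ((q.2 : ℝ) / (m n i : ℝ) - 1/2) * (q.1 - 1/2))
        (fun i => by
          apply Measurable.mul
          · exact ((measurable_from_top.comp measurable_snd).div_const _).sub_const _
          · exact measurable_fst.sub_const _)
      exact this
    have hVarSum : variance (∑ i, X i) (μ n) = ∑ i, variance (X i) (μ n) :=
      IndepFun.variance_sum (fun i _ => hXmem i)
        (fun i _ j _ hij => hiIX.indepFun hij)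
    have hVarS : variance (∑ i, X i) (μ n) ≤ (n : ℝ) / 16 := by
      rw [hVarSum]
      calc ∑ i, variance (X i) (μ n) ≤ ∑ _i : Fin n, (1/16 : ℝ) :=
            Finset.sum_le_sum fun i _ => hVar i
        _ = (n : ℝ) / 16 := by
            rw [Finset.sum_const, Finset.card_univ, Fintype.card_fin, nsmul_eq_mul]
            ring
    have hES : (μ n)[∑ i, X i] = A n := by
      have : (μ n)[∑ i, X i] = ∫ ω, ∑ i, X i ω ∂μ n := by
        congr 1; funext ω; simp [Finset.sum_apply]
      rw [this, integral_finset_sum _ (fun i _ => hXint i)]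
      exact Finset.sum_congr rfl fun i _ => hEX i
    have hmemS : MemLp (∑ i, X i) 2 (μ n) := memLp_finset_sum' _ (fun i _ => hXmem i)
    have hcheb := meas_ge_le_variance_div_sq (μ := μ n) hmemS hApos
    have hsubset : {ω | ∑ i, ((k n i ω : ℝ) / (m n i : ℝ) - 1/2) * (ξ n i ω - 1/2) ≤ 0} ⊆
        {ω | A n ≤ |(∑ i, X i) ω - (μ n)[∑ i, X i]|} := by
      intro ω hω
      simp only [Set.mem_setOf_eq] at hω ⊢
      have hXω : (∑ i, X i) ω = ∑ i, ((k n i ω : ℝ) / (m n i : ℝ) - 1/2) * (ξ n i ω - 1/2) := by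
        simp [Finset.sum_apply, hX_def, hY_def, hZ_def]
      rw [hES, hXω, abs_sub_comm]
      rw [abs_of_nonneg (by linarith)]
      linarith
    calc μ n {ω | ∑ i, ((k n i ω : ℝ) / (m n i : ℝ) - 1/2) * (ξ n i ω - 1/2) ≤ 0}
        ≤ μ n {ω | A n ≤ |(∑ i, X i) ω - (μ n)[∑ i, X i]|} := measure_mono hsubset
      _ ≤ ENNReal.ofReal (variance (∑ i, X i) (μ n) / (A n) ^ 2) := hcheb
      _ ≤ ENNReal.ofReal ((n : ℝ) / 16 / (A n) ^ 2) := by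
          apply ENNReal.ofReal_le_ofReal
          gcongr
  -- Now the limit
  have hbound : Tendsto (fun n : ℕ => ENNReal.ofReal ((n : ℝ) / 16 / (A n) ^ 2)) atTop (nhds 0) := by
    have hr : Tendsto (fun n : ℕ => (n : ℝ) / 16 / (A n) ^ 2) atTop (nhds 0) := by
      set C : ℕ → ℝ := fun n => (1 / Real.sqrt n) * A n with hC_def
      have hCdiv : Tendsto C atTop atTop := hdiv
      have hCsq : Tendsto (fun n => 16 * (C n) ^ 2) atTop atTop := by
        have h2 : Tendsto (fun n => (C n) ^ 2) atTop atTop := by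
          simpa [sq] using hCdiv.atTop_mul_atTop₀ hCdiv
        exact Tendsto.const_mul_atTop (by norm_num) h2
      have hinv : Tendsto (fun n => (16 * (C n) ^ 2)⁻¹) atTop (nhds 0) :=
        tendsto_inv_atTop_zero.comp hCsq
      apply hinv.congr'
      filter_upwards [hCdiv.eventually_ge_atTop 1, eventually_ge_atTop 1] with n hC1 hn1
      have hsn : (0 : ℝ) < Real.sqrt n := Real.sqrt_pos.mpr (by exact_mod_cast hn1)
      have hCA : C n = (1 / Real.sqrt n) * A n := rfl
      have hAn : A n = Real.sqrt n * C n := by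
        rw [hCA]; field_simp
      have hCpos : (0 : ℝ) < C n := by linarith
      have hs2 : Real.sqrt n ^ 2 = (n : ℝ) := Real.sq_sqrt (Nat.cast_nonneg n)
      show (16 * C n ^ 2)⁻¹ = (n : ℝ) / 16 / (A n) ^ 2
      rw [hAn, ← hs2]
      field_simp
      rw [Real.sqrt_sq hsn.le]
    have := ENNReal.tendsto_ofReal hr
    simpa using this
  have hev : ∀ᶠ n in atTop, 0 < A n := by
    filter_upwards [hdiv.eventually_ge_atTop 1, eventually_ge_atTop 1] with n hC1 hn1
    have hsn : (0 : ℝ) < Real.sqrt n := Real.sqrt_pos.mpr (by exact_mod_cast hn1)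
    have hC1' : 1 ≤ (1 / Real.sqrt n) * A n := hC1
    have hA0 : 0 ≤ A n := Finset.sum_nonneg fun i _ => sq_nonneg _
    rcases hA0.lt_or_eq with h | h
    · exact h
    · exfalso
      have : (1 / Real.sqrt n) * A n = 0 := by rw [← h, mul_zero]
      linarith
  refine tendsto_of_tendsto_of_tendsto_of_le_of_le' tendsto_const_nhds hbound ?_ ?_
  · exact Eventually.of_forall fun n => zero_le
  · filter_upwards [hev] with n hn
    exact key n hn
end

section
/- Corollary 8 (uniform weight estimation): in the estimation model, let 0 < δ < 1, 0 < ε ≤ 5 and ε̃ = (√(4ε+1) − 1)/4. If ε̃²·m_i·min{p_i, q_i} ≥ 3·log(4n/δ) for every i ∈ [n], then P( max_{i∈[n]} |w_i − ŵ_i| > ε ) ≤ δ, where w_i = log(p_i/q_i) and ŵ_i = log(p̂_i/(1 − p̂_i)). -/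
open MeasureTheory ProbabilityTheory

/-- The plug-in (empirical) Nitzan–Paroush weight `ŵ = log(p̂/(1 − p̂))`, viewed as an
extended real: it is `−∞` when `p̂ = 0` and `+∞` when `p̂ = 1`. -/
noncomputable def plugInWeight (x : ℝ) : EReal :=
  if x = 0 then ⊥ else if x = 1 then ⊤ else ((Real.log (x / (1 - x)) : ℝ) : EReal)

open Real Finset
open scoped ENNReal

lemma quad_le_exp {t : ℝ} (ht : 0 ≤ t) : 1 + t + t^2/2 ≤ exp t := by
  have h := Real.sum_le_exp_of_nonneg ht 3
  norm_num [Finset.sum_range_succ, Nat.factorial] at h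
  linarith

lemma exp_le_cubic {t : ℝ} (ht : 0 ≤ t) (ht1 : t ≤ 1) :
    exp t ≤ 1 + t + t^2/2 + 2/9 * t^3 := by
  have h := Real.exp_bound (x := t) (by rw [abs_of_nonneg ht]; exact ht1) (n := 3) (by norm_num)
  rw [abs_of_nonneg ht, abs_le] at h
  norm_num [Finset.sum_range_succ, Nat.factorial] at h
  linarith [h.2]

lemma scalarA {x : ℝ} (hx : 0 < x) (hx1 : x ≤ 1) :
    x - (1+x) * Real.log (1+x) ≤ -(x^2/3) := by
  set s : ℝ := (x + x^2/3) / (1+x) with hs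
  have h1x : (0:ℝ) < 1 + x := by linarith
  have hs0 : 0 ≤ s := by positivity
  have hsx : s * (1+x) = x + x^2/3 := by
    rw [hs, div_mul_cancel₀ _ h1x.ne']
  have hs1 : s ≤ 1 := by
    rw [hs, div_le_one h1x]; nlinarith
  have e : (s + s^2/2 + 2/9*s^3) * (1+x)^3
      = (x+x^2/3)*(1+x)^2 + (x+x^2/3)^2*(1+x)/2 + 2/9*(x+x^2/3)^3 := by
    linear_combination ((1+x)^2 + (s*(1+x)+(x+x^2/3))*(1+x)/2
      + 2/9*((s*(1+x))^2 + s*(1+x)*(x+x^2/3) + (x+x^2/3)^2)) * hsx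
  have hx2 : (0:ℝ) ≤ x^2 := pow_nonneg hx.le 2
  have hx3 : (0:ℝ) ≤ x^3 := pow_nonneg hx.le 3
  have hx4 : (0:ℝ) ≤ x^4 := pow_nonneg hx.le 4
  have h5 : x^5 ≤ x^3 := by
    calc x^5 = x^2 * x^3 := by ring
      _ ≤ 1 * x^3 := mul_le_mul_of_nonneg_right (by nlinarith) hx3
      _ = x^3 := one_mul _
  have h6 : x^6 ≤ x^2 := by
    calc x^6 = x^4 * x^2 := by ring
      _ ≤ 1 * x^2 := mul_le_mul_of_nonneg_right (by nlinarith) hx2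
      _ = x^2 := one_mul _
  have poly : (x+x^2/3)*(1+x)^2 + (x+x^2/3)^2*(1+x)/2 + 2/9*(x+x^2/3)^3
      ≤ x*(1+x)^3 := by nlinarith [h5, h6, hx2, hx3, hx4]
  have key : s + s^2/2 + 2/9*s^3 ≤ x :=
    le_of_mul_le_mul_right (e.le.trans poly) (by positivity)
  have hexp : exp s ≤ 1 + x :=
    le_trans (exp_le_cubic hs0 hs1) (by linarith)
  have hlog : s ≤ Real.log (1+x) := (Real.le_log_iff_exp_le h1x).2 hexp
  nlinarith [mul_le_mul_of_nonneg_left hlog h1x.le]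

lemma scalarB {x : ℝ} (hx : 0 < x) (hx1 : x < 1) :
    -x - (1-x) * Real.log (1-x) ≤ -(x^2/3) := by
  set s : ℝ := (x - x^2/3) / (1-x) with hs
  have h1x : (0:ℝ) < 1 - x := by linarith
  have hs0 : 0 ≤ s := by
    apply div_nonneg _ h1x.le; nlinarith
  have hsx : s * (1-x) = x - x^2/3 := by
    rw [hs, div_mul_cancel₀ _ h1x.ne']
  have e : (1+s+s^2/2)*(1-x)^2 = (1-x)^2 + (x-x^2/3)*(1-x) + (x-x^2/3)^2/2 := by
    linear_combination ((1-x) + (s*(1-x)+(x-x^2/3))/2) * hsx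
  have poly : (1-x) ≤ (1-x)^2 + (x-x^2/3)*(1-x) + (x-x^2/3)^2/2 := by
    nlinarith [sq_nonneg x]
  have key : 1 ≤ (1+s+s^2/2)*(1-x) :=
    le_of_mul_le_mul_right (by nlinarith) h1x
  have hexp : 1/(1-x) ≤ exp s := by
    rw [div_le_iff₀ h1x]
    nlinarith [quad_le_exp hs0]
  have hlog : Real.log (1/(1-x)) ≤ s :=
    (Real.log_le_iff_le_exp (by positivity)).2 hexp
  rw [one_div, Real.log_inv] at hlog
  nlinarith [mul_le_mul_of_nonneg_left hlog h1x.le]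

lemma cubic_le_exp {t : ℝ} (ht : 0 ≤ t) : 1 + t + t^2/2 + t^3/6 ≤ exp t := by
  have h := Real.sum_le_exp_of_nonneg ht 4
  norm_num [Finset.sum_range_succ, Nat.factorial] at h
  linarith

lemma logratio {x : ℝ} (hx : 0 < x) (hx1 : x < 1) (hx5 : 2*x + 4*x^2 ≤ 5) :
    Real.log ((1+x)/(1-x)) ≤ 2*x + 4*x^2 := by
  have h1x : (0:ℝ) < 1 - x := by linarith
  have h9 : x ≤ 9/10 := by nlinarith [sq_nonneg (x - 9/10)]
  have hsq : x^2 ≤ 81/100 := by nlinarith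
  have hx4 : (0:ℝ) ≤ x^4 := pow_nonneg hx.le 4
  have hx3 : (0:ℝ) ≤ x^3 := pow_nonneg hx.le 3
  have hx2 : (0:ℝ) ≤ x^2 := pow_nonneg hx.le 2
  have f1 : x^6 ≤ (81/100)*x^4 := by
    calc x^6 = x^2 * x^4 := by ring
      _ ≤ (81/100) * x^4 := mul_le_mul_of_nonneg_right hsq hx4
  have hx37 : x^3 ≤ 729/1000 := by nlinarith
  have f2 : x^7 ≤ (729/1000)*x^4 := by
    calc x^7 = x^3 * x^4 := by ring
      _ ≤ (729/1000) * x^4 := mul_le_mul_of_nonneg_right hx37 hx4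
  have f3 : x^4 ≤ (9/10)*x^3 := by
    calc x^4 = x * x^3 := by ring
      _ ≤ (9/10) * x^3 := mul_le_mul_of_nonneg_right h9 hx3
  have f4 : x^3 ≤ (9/10)*x^2 := by
    calc x^3 = x * x^2 := by ring
      _ ≤ (9/10) * x^2 := mul_le_mul_of_nonneg_right h9 hx2
  set t : ℝ := 2*x + 4*x^2 with hts
  have ht0 : 0 ≤ t := by positivity
  have hexp : (1+x)/(1-x) ≤ exp t := by
    have hcb := cubic_le_exp ht0
    rw [div_le_iff₀ h1x]
    have poly : 1 + x ≤ (1 + t + t^2/2 + t^3/6) * (1-x) := by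
      rw [hts]; nlinarith [f1, f2, f3, f4, hx2]
    nlinarith [mul_le_mul_of_nonneg_right hcb h1x.le]
  calc Real.log ((1+x)/(1-x)) ≤ Real.log (exp t) :=
        Real.log_le_log (by positivity) hexp
    _ = t := Real.log_exp t

lemma chernoff_core (θ : ℝ) (hθ0 : 0 ≤ θ) (hθ1 : θ ≤ 1) (m : ℕ) (t a : ℝ)
    (P : ℕ → Prop) [DecidablePred P]
    (hP : ∀ j ∈ Finset.range (m+1), P j → 0 ≤ t*((j:ℝ)-a)) :
    ∑ j ∈ (Finset.range (m+1)).filter P, (m.choose j : ℝ) * θ^j * (1-θ)^(m-j)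
      ≤ exp ((m:ℝ)*θ*(exp t - 1) - t*a) := by
  have hq : (0:ℝ) ≤ 1 - θ := by linarith
  have hpm : ∀ j : ℕ, 0 ≤ (m.choose j : ℝ) * θ^j * (1-θ)^(m-j) := by
    intro j; positivity
  have step1 : ∑ j ∈ (Finset.range (m+1)).filter P, (m.choose j : ℝ) * θ^j * (1-θ)^(m-j)
      ≤ ∑ j ∈ Finset.range (m+1),
          ((m.choose j : ℝ) * θ^j * (1-θ)^(m-j)) * exp (t*((j:ℝ)-a)) := by
    refine le_trans (Finset.sum_le_sum ?_) (Finset.sum_le_sum_of_subset_of_nonneg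
      (Finset.filter_subset _ _) ?_)
    · intro j hj
      rw [Finset.mem_filter] at hj
      have h1 : 1 ≤ exp (t*((j:ℝ)-a)) := Real.one_le_exp (hP j hj.1 hj.2)
      nlinarith [hpm j]
    · intro j _ _; positivity
  have step2 : ∑ j ∈ Finset.range (m+1),
          ((m.choose j : ℝ) * θ^j * (1-θ)^(m-j)) * exp (t*((j:ℝ)-a))
      = exp (-(t*a)) * (θ * exp t + (1-θ))^m := by
    rw [add_pow, Finset.mul_sum]
    refine Finset.sum_congr rfl ?_
    intro j hj
    rw [mul_pow, ← Real.exp_nat_mul]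
    have : t*((j:ℝ)-a) = (j:ℝ)*t + -(t*a) := by ring
    rw [this, Real.exp_add]
    ring
  have hbase : (0:ℝ) ≤ θ * exp t + (1-θ) := by positivity
  have step3 : (θ * exp t + (1-θ))^m ≤ exp ((m:ℝ)*θ*(exp t - 1)) := by
    have h1 : θ * exp t + (1-θ) ≤ exp (θ*(exp t - 1)) := by
      have := Real.add_one_le_exp (θ*(exp t - 1))
      linarith
    calc (θ * exp t + (1-θ))^m ≤ (exp (θ*(exp t - 1)))^m :=
          pow_le_pow_left₀ hbase h1 m
      _ = exp ((m:ℝ)*(θ*(exp t - 1))) := (Real.exp_nat_mul _ m).symm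
      _ = exp ((m:ℝ)*θ*(exp t - 1)) := by ring_nf
  calc ∑ j ∈ (Finset.range (m+1)).filter P, (m.choose j : ℝ) * θ^j * (1-θ)^(m-j)
      ≤ exp (-(t*a)) * (θ * exp t + (1-θ))^m := by rw [← step2]; exact step1
    _ ≤ exp (-(t*a)) * exp ((m:ℝ)*θ*(exp t - 1)) :=
        mul_le_mul_of_nonneg_left step3 (exp_nonneg _)
    _ = exp ((m:ℝ)*θ*(exp t - 1) - t*a) := by rw [← Real.exp_add]; ring_nf

lemma binom_sum_one (θ : ℝ) (m : ℕ) :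
    ∑ j ∈ Finset.range (m+1), (m.choose j : ℝ) * θ^j * (1-θ)^(m-j) = 1 := by
  have h := add_pow θ (1-θ) m
  have h2 : θ + (1-θ) = 1 := by ring
  rw [h2, one_pow] at h
  calc ∑ j ∈ Finset.range (m+1), (m.choose j : ℝ) * θ^j * (1-θ)^(m-j)
      = ∑ j ∈ Finset.range (m+1), θ^j * (1-θ)^(m-j) * (m.choose j : ℝ) :=
        Finset.sum_congr rfl (fun j _ => by ring)
    _ = 1 := h.symm

lemma mul_nonneg_of_nonpos_nonpos' {a b : ℝ} (ha : a ≤ 0) (hb : b ≤ 0) : 0 ≤ a * b := by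
  nlinarith

lemma binom_tail {Ω : Type*} [MeasurableSpace Ω] (μ : Measure Ω) [IsProbabilityMeasure μ]
    (k : Ω → ℕ) (hk : Measurable k)
    (θ : ℝ) (hθ0 : 0 < θ) (hθ1 : θ < 1) (m : ℕ) (hm : 1 ≤ m)
    (hpmf : ∀ j ≤ m, μ {ω | k ω = j} =
      ENNReal.ofReal ((m.choose j : ℝ) * θ^j * (1-θ)^(m-j)))
    (x : ℝ) (hx0 : 0 < x) (hx1 : x < 1) :
    μ {ω | x*((m:ℝ)*θ) < |(k ω:ℝ) - (m:ℝ)*θ|} ≤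
      ENNReal.ofReal (2 * exp (-(x^2*((m:ℝ)*θ)/3))) := by
  classical
  have hq : (0:ℝ) < 1 - θ := by linarith
  have hpm : ∀ j : ℕ, 0 ≤ (m.choose j : ℝ) * θ^j * (1-θ)^(m-j) := fun j => by positivity
  have hmθ : (0:ℝ) < (m:ℝ)*θ := by
    have : (1:ℝ) ≤ (m:ℝ) := by exact_mod_cast hm
    nlinarith
  -- measurability of level sets
  have hmeas : ∀ j : ℕ, MeasurableSet {ω | k ω = j} := fun j =>
    hk (measurableSet_singleton j)
  -- k ≤ m a.s.
  have hcup : {ω | k ω ≤ m} = ⋃ j ∈ Finset.range (m+1), {ω | k ω = j} := by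
    ext ω; simp [Nat.lt_succ_iff]
  have h1 : μ {ω | k ω ≤ m} = 1 := by
    rw [hcup, measure_biUnion_finset ?_ (fun j _ => hmeas j)]
    · rw [Finset.sum_congr rfl (fun j hj => hpmf j (by
        rw [Finset.mem_range, Nat.lt_succ_iff] at hj; exact hj)),
        ← ENNReal.ofReal_sum_of_nonneg (fun j _ => hpm j), binom_sum_one]
      simp
    · intro i _ j _ hij
      simp only [Set.disjoint_left]
      rintro ω h1 h2
      exact hij (h1.symm.trans h2)
  have h0 : μ {ω | m < k ω} = 0 := by
    have hc : {ω | m < k ω} = {ω | k ω ≤ m}ᶜ := by ext ω; simp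
    rw [hc, measure_compl (by
      rw [hcup]; exact MeasurableSet.biUnion (Finset.range (m+1)).countable_toSet
        (fun j _ => hmeas j)) (measure_ne_top μ _), h1, measure_univ]
    simp
  -- reduction to finite sum
  set P : ℕ → Prop := fun j => x*((m:ℝ)*θ) < |(j:ℝ) - (m:ℝ)*θ| with hP
  have hsub : {ω | x*((m:ℝ)*θ) < |(k ω:ℝ) - (m:ℝ)*θ|} ⊆
      (⋃ j ∈ (Finset.range (m+1)).filter P, {ω | k ω = j}) ∪ {ω | m < k ω} := by
    intro ω hω
    by_cases h : k ω ≤ m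
    · left
      simp only [Set.mem_iUnion, Finset.mem_filter, Finset.mem_range, Nat.lt_succ_iff]
      exact ⟨k ω, ⟨⟨h, hω⟩, rfl⟩⟩
    · right; exact not_le.mp h
  have hbound : μ {ω | x*((m:ℝ)*θ) < |(k ω:ℝ) - (m:ℝ)*θ|} ≤
      ENNReal.ofReal (∑ j ∈ (Finset.range (m+1)).filter P,
        (m.choose j : ℝ) * θ^j * (1-θ)^(m-j)) := by
    refine le_trans (measure_mono hsub) (le_trans (measure_union_le _ _) ?_)
    rw [h0, add_zero]
    refine le_trans (measure_biUnion_finset_le _ _) ?_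
    rw [Finset.sum_congr rfl (fun j hj => hpmf j (by
      rw [Finset.mem_filter, Finset.mem_range, Nat.lt_succ_iff] at hj; exact hj.1)),
      ← ENNReal.ofReal_sum_of_nonneg (fun j _ => hpm j)]
  refine le_trans hbound (ENNReal.ofReal_le_ofReal ?_)
  -- split the sum
  set Pp : ℕ → Prop := fun j => (1+x)*((m:ℝ)*θ) ≤ (j:ℝ) with hPp
  set Pm : ℕ → Prop := fun j => (j:ℝ) ≤ (1-x)*((m:ℝ)*θ) with hPm
  have hsplit : (Finset.range (m+1)).filter P ⊆
      (Finset.range (m+1)).filter Pp ∪ (Finset.range (m+1)).filter Pm := by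
    intro j hj
    rw [Finset.mem_filter] at hj
    rw [Finset.mem_union, Finset.mem_filter, Finset.mem_filter]
    rcases lt_abs.mp hj.2 with h | h
    · left; exact ⟨hj.1, by rw [hPp]; dsimp only; nlinarith⟩
    · right; exact ⟨hj.1, by rw [hPm]; dsimp only; nlinarith⟩
  have hdisj : Disjoint ((Finset.range (m+1)).filter Pp) ((Finset.range (m+1)).filter Pm) := by
    rw [Finset.disjoint_left]
    intro j hj1 hj2
    rw [Finset.mem_filter] at hj1 hj2
    have ha := hj1.2; have hb := hj2.2
    simp only [hPp, hPm] at ha hb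
    nlinarith
  have hup : ∑ j ∈ (Finset.range (m+1)).filter Pp, (m.choose j : ℝ) * θ^j * (1-θ)^(m-j)
      ≤ exp (-(x^2*((m:ℝ)*θ)/3)) := by
    have ht0 : 0 ≤ Real.log (1+x) := Real.log_nonneg (by linarith)
    have hcc := chernoff_core θ hθ0.le hθ1.le m (Real.log (1+x)) ((1+x)*((m:ℝ)*θ)) Pp
      (fun j _ hPj => mul_nonneg ht0 (by linarith [show (1+x)*((m:ℝ)*θ) ≤ (j:ℝ) from hPj]))
    refine le_trans hcc (Real.exp_le_exp.mpr ?_)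
    rw [Real.exp_log (by linarith : (0:ℝ) < 1+x)]
    have hA := scalarA hx0 hx1.le
    calc (m:ℝ)*θ*((1+x) - 1) - Real.log (1+x) * ((1+x)*((m:ℝ)*θ))
        = ((m:ℝ)*θ) * (x - (1+x)*Real.log (1+x)) := by ring
      _ ≤ ((m:ℝ)*θ) * (-(x^2/3)) := mul_le_mul_of_nonneg_left hA hmθ.le
      _ = -(x^2*((m:ℝ)*θ)/3) := by ring
  have hlo : ∑ j ∈ (Finset.range (m+1)).filter Pm, (m.choose j : ℝ) * θ^j * (1-θ)^(m-j)
      ≤ exp (-(x^2*((m:ℝ)*θ)/3)) := by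
    have ht0 : Real.log (1-x) ≤ 0 := Real.log_nonpos (by linarith) (by linarith)
    have hcc := chernoff_core θ hθ0.le hθ1.le m (Real.log (1-x)) ((1-x)*((m:ℝ)*θ)) Pm
      (fun j _ hPj => mul_nonneg_of_nonpos_nonpos' ht0 (by linarith [show (j:ℝ) ≤ (1-x)*((m:ℝ)*θ) from hPj]))
    refine le_trans hcc (Real.exp_le_exp.mpr ?_)
    rw [Real.exp_log (by linarith : (0:ℝ) < 1-x)]
    have hB := scalarB hx0 hx1
    calc (m:ℝ)*θ*((1-x) - 1) - Real.log (1-x) * ((1-x)*((m:ℝ)*θ))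
        = ((m:ℝ)*θ) * (-x - (1-x)*Real.log (1-x)) := by ring
      _ ≤ ((m:ℝ)*θ) * (-(x^2/3)) := mul_le_mul_of_nonneg_left hB hmθ.le
      _ = -(x^2*((m:ℝ)*θ)/3) := by ring
  calc ∑ j ∈ (Finset.range (m+1)).filter P, (m.choose j : ℝ) * θ^j * (1-θ)^(m-j)
      ≤ ∑ j ∈ (Finset.range (m+1)).filter Pp ∪ (Finset.range (m+1)).filter Pm,
          (m.choose j : ℝ) * θ^j * (1-θ)^(m-j) :=
        Finset.sum_le_sum_of_subset_of_nonneg hsplit (fun j _ _ => hpm j)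
    _ = _ + _ := Finset.sum_union hdisj
    _ ≤ 2 * exp (-(x^2*((m:ℝ)*θ)/3)) := by linarith

lemma binom_trunc {Ω : Type*} [MeasurableSpace Ω] (μ : Measure Ω) [IsProbabilityMeasure μ]
    (k : Ω → ℕ) (hk : Measurable k) (θ : ℝ) (hθ0 : 0 < θ) (hθ1 : θ < 1) (m : ℕ)
    (hpmf : ∀ j ≤ m, μ {ω | k ω = j} =
      ENNReal.ofReal ((m.choose j : ℝ) * θ^j * (1-θ)^(m-j))) :
    μ {ω | m < k ω} = 0 := by
  have hq : (0:ℝ) < 1 - θ := by linarith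
  have hpm : ∀ j : ℕ, 0 ≤ (m.choose j : ℝ) * θ^j * (1-θ)^(m-j) := fun j => by positivity
  have hmeas : ∀ j : ℕ, MeasurableSet {ω | k ω = j} := fun j =>
    hk (measurableSet_singleton j)
  have hcup : {ω | k ω ≤ m} = ⋃ j ∈ Finset.range (m+1), {ω | k ω = j} := by
    ext ω; simp [Nat.lt_succ_iff]
  have h1 : μ {ω | k ω ≤ m} = 1 := by
    rw [hcup, measure_biUnion_finset ?_ (fun j _ => hmeas j)]
    · rw [Finset.sum_congr rfl (fun j hj => hpmf j (by
        rw [Finset.mem_range, Nat.lt_succ_iff] at hj; exact hj)),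
        ← ENNReal.ofReal_sum_of_nonneg (fun j _ => hpm j), binom_sum_one]
      simp
    · intro i _ j _ hij
      simp only [Set.disjoint_left]
      rintro ω h1 h2
      exact hij (h1.symm.trans h2)
  have hc : {ω | m < k ω} = {ω | k ω ≤ m}ᶜ := by ext ω; simp
  rw [hc, measure_compl (by
    rw [hcup]; exact MeasurableSet.biUnion (Finset.range (m+1)).countable_toSet
      (fun j _ => hmeas j)) (measure_ne_top μ _), h1, measure_univ]
  simp

lemma dev_bound {Ω : Type*} [MeasurableSpace Ω] (μ : Measure Ω) [IsProbabilityMeasure μ]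
    (k : Ω → ℕ) (hk : Measurable k)
    (p : ℝ) (hp0 : 0 < p) (hp1 : p < 1) (m : ℕ) (hm : 1 ≤ m)
    (hpmf : ∀ j ≤ m, μ {ω | k ω = j} =
      ENNReal.ofReal ((m.choose j : ℝ) * p^j * (1-p)^(m-j)))
    (x : ℝ) (hx0 : 0 < x) (hx1 : x < 1) :
    μ {ω | x*((m:ℝ)*min p (1-p)) < |(k ω:ℝ) - (m:ℝ)*p|} ≤
      ENNReal.ofReal (2 * exp (-(x^2*((m:ℝ)*min p (1-p))/3))) := by
  rcases le_or_gt p (1-p) with hle | hlt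
  · rw [min_eq_left hle]
    exact binom_tail μ k hk p hp0 hp1 m hm hpmf x hx0 hx1
  · rw [min_eq_right hlt.le]
    set q : ℝ := 1 - p with hqd
    have hq0 : 0 < q := by rw [hqd]; linarith
    have hq1 : q < 1 := by rw [hqd]; linarith
    set k' : Ω → ℕ := fun ω => m - k ω with hk'd
    have hk'm : Measurable k' := (measurable_from_top).comp hk
    have htr : μ {ω | m < k ω} = 0 := binom_trunc μ k hk p hp0 hp1 m hpmf
    have hpmf' : ∀ j ≤ m, μ {ω | k' ω = j} =
        ENNReal.ofReal ((m.choose j : ℝ) * q^j * (1-q)^(m-j)) := by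
      intro j hj
      have h1q : (1:ℝ) - q = p := by rw [hqd]; ring
      rcases Nat.eq_zero_or_pos j with hj0 | hjpos
      · subst hj0
        have hset : {ω | k' ω = 0} = {ω | k ω = m} ∪ {ω | m < k ω} := by
          ext ω
          simp only [hk'd, Set.mem_setOf_eq, Set.mem_union]
          omega
        rw [hset]
        have hun : μ ({ω | k ω = m} ∪ {ω | m < k ω}) = μ {ω | k ω = m} :=
          le_antisymm (le_trans (measure_union_le _ _) (by rw [htr, add_zero]))
            (measure_mono Set.subset_union_left)
        rw [hun, hpmf m le_rfl]
        congr 1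
        rw [h1q]
        simp [Nat.choose_self, Nat.choose_zero_right]
      · have hset : {ω | k' ω = j} = {ω | k ω = m - j} := by
          ext ω
          simp only [hk'd, Set.mem_setOf_eq]
          omega
        rw [hset, hpmf (m - j) (Nat.sub_le m j)]
        congr 1
        rw [Nat.sub_sub_self hj, Nat.choose_symm hj, h1q, hqd]
        ring
    have hmain := binom_tail μ k' hk'm q hq0 hq1 m hm hpmf' x hx0 hx1
    have hsub : {ω | x*((m:ℝ)*q) < |(k ω:ℝ) - (m:ℝ)*p|} ⊆
        {ω | x*((m:ℝ)*q) < |(k' ω:ℝ) - (m:ℝ)*q|} ∪ {ω | m < k ω} := by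
      intro ω hω
      by_cases h : k ω ≤ m
      · left
        have hc : ((k' ω : ℕ) : ℝ) = (m:ℝ) - (k ω : ℝ) := by
          rw [hk'd]
          push_cast [Nat.cast_sub h]
          ring
        simp only [Set.mem_setOf_eq, hc]
        have he : (m:ℝ) - (k ω:ℝ) - (m:ℝ)*q = -((k ω:ℝ) - (m:ℝ)*p) := by
          rw [hqd]; ring
        rw [he, abs_neg]
        exact hω
      · right; exact not_le.mp h
    calc μ {ω | x*((m:ℝ)*q) < |(k ω:ℝ) - (m:ℝ)*p|}
        ≤ μ ({ω | x*((m:ℝ)*q) < |(k' ω:ℝ) - (m:ℝ)*q|} ∪ {ω | m < k ω}) :=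
          measure_mono hsub
      _ ≤ μ {ω | x*((m:ℝ)*q) < |(k' ω:ℝ) - (m:ℝ)*q|} + μ {ω | m < k ω} :=
          measure_union_le _ _
      _ = μ {ω | x*((m:ℝ)*q) < |(k' ω:ℝ) - (m:ℝ)*q|} := by rw [htr, add_zero]
      _ ≤ _ := hmain

lemma det_lemma {p r x e : ℝ} (hp0 : 0 < p) (hp1 : p < 1) (hx0 : 0 < x) (hx1 : x < 1)
    (he : 2*x + 4*x^2 ≤ e) (h5 : 2*x + 4*x^2 ≤ 5)
    (hr : |r - p| ≤ x * min p (1-p)) :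
    0 < r ∧ r < 1 ∧ |Real.log (r/(1-r)) - Real.log (p/(1-p))| ≤ e := by
  have hd1 : min p (1-p) ≤ p := min_le_left _ _
  have hd2 : min p (1-p) ≤ 1-p := min_le_right _ _
  have hd0 : 0 < min p (1-p) := lt_min hp0 (by linarith)
  rw [abs_le] at hr
  have hr0 : 0 < r := by nlinarith
  have hr1 : r < 1 := by nlinarith
  have hru : r ≤ (1+x)*p := by nlinarith
  have hrl : (1-x)*p ≤ r := by nlinarith
  have h1ru : 1-r ≤ (1+x)*(1-p) := by nlinarith
  have h1rl : (1-x)*(1-p) ≤ 1-r := by nlinarith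
  have hx0' : (0:ℝ) < 1 - x := by linarith
  have e1 : Real.log r ≤ Real.log (1+x) + Real.log p := by
    rw [← Real.log_mul (by linarith) hp0.ne']
    exact Real.log_le_log hr0 hru
  have e2 : Real.log (1-x) + Real.log p ≤ Real.log r := by
    rw [← Real.log_mul hx0'.ne' hp0.ne']
    exact Real.log_le_log (mul_pos hx0' hp0) hrl
  have e3 : Real.log (1-r) ≤ Real.log (1+x) + Real.log (1-p) := by
    rw [← Real.log_mul (by linarith) (ne_of_gt (by linarith : (0:ℝ) < 1-p))]
    exact Real.log_le_log (by linarith) h1ru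
  have e4 : Real.log (1-x) + Real.log (1-p) ≤ Real.log (1-r) := by
    rw [← Real.log_mul hx0'.ne' (ne_of_gt (by linarith : (0:ℝ) < 1-p))]
    exact Real.log_le_log (mul_pos hx0' (by linarith)) h1rl
  have e5 : Real.log ((1+x)/(1-x)) = Real.log (1+x) - Real.log (1-x) :=
    Real.log_div (by linarith) hx0'.ne'
  have lr := logratio hx0 hx1 h5
  have g1 : Real.log (r/(1-r)) = Real.log r - Real.log (1-r) :=
    Real.log_div hr0.ne' (by linarith)
  have g2 : Real.log (p/(1-p)) = Real.log p - Real.log (1-p) :=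
    Real.log_div hp0.ne' (by linarith)
  refine ⟨hr0, hr1, ?_⟩
  rw [abs_le, g1, g2]
  constructor <;> linarith

/-- Corollary 8 (uniform weight estimation): if
`ε̃² m i min{p i, q i} ≥ 3 log(4n/δ)` for every `i`, where `ε̃ = (√(4ε+1) − 1)/4`,
then with probability at least `1 − δ` every plug-in weight `ŵ i` is within `ε` of the
true weight `w i` (the event `max_i |w i − ŵ i| > ε` is that some `ŵ i` falls outside
the interval `[w i − ε, w i + ε]` in the extended reals). -/
theorem uniform_weight_estimation
    {Ω : Type*} [MeasurableSpace Ω] (μ : Measure Ω) [IsProbabilityMeasure μ]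
    (n : ℕ) (hn : 1 ≤ n)
    (p : Fin n → ℝ) (hp : ∀ i, p i ∈ Set.Ioo (0 : ℝ) 1)
    (m : Fin n → ℕ) (hm : ∀ i, 1 ≤ m i)
    (k : Fin n → Ω → ℕ) (hkmeas : ∀ i, Measurable (k i))
    (hbinom : ∀ i j, j ≤ m i → μ {ω | k i ω = j} =
        ENNReal.ofReal ((m i).choose j * p i ^ j * (1 - p i) ^ (m i - j)))
    (hind : iIndepFun k μ)
    (δ : ℝ) (hδ0 : 0 < δ) (hδ1 : δ < 1)
    (ε : ℝ) (hε0 : 0 < ε) (hε5 : ε ≤ 5)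
    (ε' : ℝ) (hε' : ε' = (Real.sqrt (4 * ε + 1) - 1) / 4)
    (w : Fin n → ℝ) (hw : ∀ i, w i = Real.log (p i / (1 - p i)))
    (hcond : ∀ i, 3 * Real.log (4 * n / δ) ≤ ε' ^ 2 * m i * min (p i) (1 - p i)) :
    μ {ω | ∃ i, plugInWeight ((k i ω : ℝ) / (m i : ℝ)) < ((w i - ε : ℝ) : EReal) ∨
              ((w i + ε : ℝ) : EReal) < plugInWeight ((k i ω : ℝ) / (m i : ℝ))} ≤
      ENNReal.ofReal δ := by
  classical
  have hs1 : (1:ℝ) < Real.sqrt (4*ε+1) := by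
    have h := Real.sqrt_lt_sqrt (by norm_num : (0:ℝ) ≤ 1) (by linarith : (1:ℝ) < 4*ε+1)
    rwa [Real.sqrt_one] at h
  have hε'0 : 0 < ε' := by rw [hε']; linarith
  have hsq : Real.sqrt (4*ε+1) ^ 2 = 4*ε+1 := Real.sq_sqrt (by linarith)
  have hεe : ε = 4*ε'^2 + 2*ε' := by
    rw [hε']; nlinarith [hsq]
  have hε'1 : ε' < 1 := by nlinarith
  have h5 : 2*ε' + 4*ε'^2 ≤ 5 := by linarith
  have hnR : (1:ℝ) ≤ (n:ℝ) := by exact_mod_cast hn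
  have hpos : (0:ℝ) < 4*n/δ := by positivity
  set B : Fin n → Set Ω := fun i =>
    {ω | ε'*((m i:ℝ)*min (p i) (1-p i)) < |(k i ω:ℝ) - (m i:ℝ)*(p i)|} with hB
  have hBbound : ∀ i, μ (B i) ≤ ENNReal.ofReal (δ/(2*n)) := by
    intro i
    have h1 := dev_bound μ (k i) (hkmeas i) (p i) (hp i).1 (hp i).2 (m i) (hm i)
      (fun j hj => hbinom i j hj) ε' hε'0 hε'1
    refine le_trans h1 (ENNReal.ofReal_le_ofReal ?_)
    have hc := hcond i
    have hexp : exp (-(ε'^2*((m i:ℝ)*min (p i) (1-p i))/3)) ≤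
        exp (- Real.log (4*n/δ)) := by
      apply Real.exp_le_exp.mpr
      have : ε' ^ 2 * (m i) * min (p i) (1 - p i)
          = ε'^2*((m i:ℝ)*min (p i) (1-p i)) := by ring
      rw [this] at hc
      linarith
    have hel : exp (- Real.log (4*n/δ)) = δ/(4*n) := by
      rw [Real.exp_neg, Real.exp_log hpos, inv_div]
    rw [hel] at hexp
    have hn0 : (n:ℝ) ≠ 0 := by positivity
    calc 2 * exp (-(ε'^2*((m i:ℝ)*min (p i) (1-p i))/3))
        ≤ 2 * (δ/(4*n)) := by linarith
      _ = δ/(2*n) := by field_simp; ring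
  have hsub : {ω | ∃ i, plugInWeight ((k i ω : ℝ) / (m i : ℝ)) < ((w i - ε : ℝ) : EReal) ∨
              ((w i + ε : ℝ) : EReal) < plugInWeight ((k i ω : ℝ) / (m i : ℝ))} ⊆
      ⋃ i, B i := by
    intro ω hω
    obtain ⟨i, hi⟩ := hω
    rw [Set.mem_iUnion]
    refine ⟨i, ?_⟩
    by_contra hBc
    rw [hB] at hBc
    simp only [Set.mem_setOf_eq, not_lt] at hBc
    have hm0 : (0:ℝ) < (m i : ℝ) := by
      have : (1:ℝ) ≤ (m i : ℝ) := by exact_mod_cast hm i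
      linarith
    set r : ℝ := (k i ω : ℝ) / (m i : ℝ) with hrdef
    have hrp : |r - p i| ≤ ε' * min (p i) (1-p i) := by
      have hre : r - p i = ((k i ω:ℝ) - (m i:ℝ)*(p i))/(m i:ℝ) := by
        rw [hrdef]; field_simp
      rw [hre, abs_div, abs_of_pos hm0, div_le_iff₀ hm0]
      calc |(k i ω:ℝ) - (m i:ℝ)*(p i)| ≤ ε'*((m i:ℝ)*min (p i) (1-p i)) := hBc
        _ = ε' * min (p i) (1-p i) * (m i:ℝ) := by ring
    obtain ⟨hr0, hr1, habs⟩ := det_lemma (hp i).1 (hp i).2 hε'0 hε'1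
      (show 2*ε' + 4*ε'^2 ≤ ε by linarith) h5 hrp
    have hpw : plugInWeight r = ((Real.log (r/(1-r)) : ℝ) : EReal) := by
      rw [plugInWeight, if_neg hr0.ne', if_neg hr1.ne]
    rw [abs_le] at habs
    rcases hi with h | h
    · rw [hpw, EReal.coe_lt_coe_iff] at h
      rw [hw i] at h
      linarith [habs.1]
    · rw [hpw, EReal.coe_lt_coe_iff] at h
      rw [hw i] at h
      linarith [habs.2]
  calc μ {ω | ∃ i, plugInWeight ((k i ω : ℝ) / (m i : ℝ)) < ((w i - ε : ℝ) : EReal) ∨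
              ((w i + ε : ℝ) : EReal) < plugInWeight ((k i ω : ℝ) / (m i : ℝ))}
      ≤ μ (⋃ i, B i) := measure_mono hsub
    _ ≤ ∑' i, μ (B i) := measure_iUnion_le _
    _ = ∑ i, μ (B i) := tsum_fintype _
    _ ≤ ∑ _i : Fin n, ENNReal.ofReal (δ/(2*n)) :=
        Finset.sum_le_sum (fun i _ => hBbound i)
    _ = (n : ℝ≥0∞) * ENNReal.ofReal (δ/(2*n)) := by
        rw [Finset.sum_const, Finset.card_univ, Fintype.card_fin, nsmul_eq_mul]
    _ = ENNReal.ofReal ((n:ℝ) * (δ/(2*n))) := by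
        rw [ENNReal.ofReal_mul (by positivity : (0:ℝ) ≤ (n:ℝ))]
        rw [ENNReal.ofReal_natCast]
    _ ≤ ENNReal.ofReal δ := by
        apply ENNReal.ofReal_le_ofReal
        have hn0 : (n:ℝ) ≠ 0 := by positivity
        have he : (n:ℝ) * (δ/(2*n)) = δ/2 := by field_simp
        rw [he]; linarith
end
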